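/- arXiv:1808.00242 — 2 statements merged into one kernel-verified Lean document; each statement's English description precedes it below -/
import Mathlib

section
/- If f : ℝ^p → ℝ is concave with a unique maximizer β_0, and f_n : ℝ^p → ℝ is a sequence of concave functions converging pointwise to f, then the convergence is uniform on compact sets, and any sequence of maximizers β_n of f_n converges to β_0. -/
open Filter Topology


open Filter Topology Metric Set

lemma AG_abs_coord_le {p : ℕ} (v : EuclideanSpace ℝ (Fin p)) (i : Fin p) : |v i| ≤ ‖v‖ := by
  rw [EuclideanSpace.norm_eq]
  have h1 : |v i| = Real.sqrt (‖v i‖ ^ 2) := by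
    rw [Real.sqrt_sq_eq_abs]; simp
  rw [h1]
  apply Real.sqrt_le_sqrt
  exact Finset.single_le_sum (f := fun j => ‖v j‖ ^ 2) (fun j _ => by positivity) (Finset.mem_univ i)

lemma AG_sum_coord_smul_single {p : ℕ} (v : EuclideanSpace ℝ (Fin p)) :
    ∑ i, (v i) • EuclideanSpace.single i (1:ℝ) = v := by
  have := (EuclideanSpace.basisFun (Fin p) ℝ).sum_repr v
  simpa [EuclideanSpace.basisFun_apply, EuclideanSpace.basisFun_repr] using this

section AGaux
open Filter Topology Metric Set

lemma AG_ball_subset_hull {p : ℕ} (c : EuclideanSpace ℝ (Fin p)) {ρ : ℝ} (hρ : 0 < ρ) :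
    ball c ρ ⊆ convexHull ℝ
      (insert c (Set.range fun ib : Fin p × Bool =>
        c + (if ib.2 then ((p:ℝ)+1)*ρ else -(((p:ℝ)+1)*ρ)) • EuclideanSpace.single ib.1 (1:ℝ))) := by
  intro x hx
  set C : ℝ := ((p:ℝ)+1)*ρ with hC
  have hCpos : 0 < C := by positivity
  set d : Fin p → ℝ := fun i => (x - c) i with hd
  have hdsum : ∑ i, |d i| ≤ (p:ℝ) * ρ := by
    have hxc : ‖x - c‖ < ρ := by rwa [mem_ball, dist_eq_norm] at hx
    calc ∑ i, |d i| ≤ ∑ _i : Fin p, ρ :=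
          Finset.sum_le_sum fun i _ => le_of_lt (lt_of_le_of_lt (AG_abs_coord_le _ _) hxc)
      _ = (p:ℝ) * ρ := by simp [mul_comm]
  set w : Option (Fin p × Bool) → ℝ := fun o => Option.rec (1 - (∑ i, |d i|)/C)
      (fun ib => if ib.2 then (|d ib.1| + d ib.1)/(2*C) else (|d ib.1| - d ib.1)/(2*C)) o with hw
  set z : Option (Fin p × Bool) → EuclideanSpace ℝ (Fin p) := fun o => Option.rec c
      (fun ib => c + (if ib.2 then C else -C) • EuclideanSpace.single ib.1 (1:ℝ)) o with hz
  have hw0 : ∀ o, 0 ≤ w o := by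
    rintro (_ | ⟨i, b⟩)
    · simp only [hw]
      have : (∑ i, |d i|)/C ≤ ((p:ℝ)*ρ)/C := by gcongr
      have h2 : ((p:ℝ)*ρ)/C ≤ 1 := by
        rw [div_le_one hCpos, hC]; nlinarith
      linarith
    · cases b <;> simp only [hw, if_true, if_false] <;>
        apply div_nonneg _ (by positivity) <;>
        linarith [le_abs_self (d i), neg_abs_le (d i)]
  have hpair : ∀ i : Fin p, w (some (i, true)) + w (some (i, false)) = |d i| / C := by
    intro i; simp only [hw, if_true, if_false, Bool.false_eq_true]; field_simp; ring
  have hwpairs : ∑ ib : Fin p × Bool, w (some ib) = (∑ i, |d i|)/C := by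
    rw [Fintype.sum_prod_type, Finset.sum_div]
    refine Finset.sum_congr rfl fun i _ => ?_
    rw [Fintype.sum_bool]
    exact hpair i
  have hwsum : ∑ o, w o = 1 := by
    rw [Fintype.sum_option, hwpairs]
    simp only [hw]
    field_simp; ring
  have h2 : ∑ ib : Fin p × Bool, (w (some ib) * (if ib.2 then C else -C)) • EuclideanSpace.single ib.1 (1:ℝ)
      = ∑ i, (d i) • EuclideanSpace.single i (1:ℝ) := by
    rw [Fintype.sum_prod_type]
    refine Finset.sum_congr rfl fun i _ => ?_
    rw [Fintype.sum_bool, ← add_smul]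
    congr 1
    simp only [hw, if_true, if_false, Bool.false_eq_true]
    field_simp; ring
  have h3 : ∑ i, (d i) • EuclideanSpace.single i (1:ℝ) = x - c := by
    simp only [hd]
    exact AG_sum_coord_smul_single (x - c)
  have hkey : ∑ o, w o • z o = x := by
    rw [Fintype.sum_option]
    have h1 : ∀ ib : Fin p × Bool, w (some ib) • z (some ib)
        = w (some ib) • c + (w (some ib) * (if ib.2 then C else -C)) • EuclideanSpace.single ib.1 (1:ℝ) := by
      intro ib; simp only [hz, smul_add, smul_smul]
    simp only [h1, Finset.sum_add_distrib, ← Finset.sum_smul, hwpairs, h2, h3]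
    simp only [hw, hz]
    module
  have hmem : (Finset.univ : Finset (Option (Fin p × Bool))).centerMass w z ∈ convexHull ℝ
      (insert c (Set.range fun ib : Fin p × Bool =>
        c + (if ib.2 then C else -C) • EuclideanSpace.single ib.1 (1:ℝ))) := by
    apply Finset.centerMass_mem_convexHull _ (fun o _ => hw0 o) (by rw [hwsum]; norm_num)
    rintro (_ | ⟨i, b⟩) _
    · exact Set.mem_insert _ _
    · exact Set.mem_insert_iff.2 (Or.inr ⟨(i, b), rfl⟩)
  have heq : (Finset.univ : Finset (Option (Fin p × Bool))).centerMass w z = x := by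
    rw [Finset.centerMass, hwsum, hkey, inv_one, one_smul]
  rwa [heq] at hmem

lemma AG_uniform_bound {p : ℕ} {g : ℕ → EuclideanSpace ℝ (Fin p) → ℝ}
    (hconc : ∀ m, ConcaveOn ℝ Set.univ (g m))
    (hbd : ∀ x, ∃ b, ∀ m, |g m x| ≤ b)
    (c : EuclideanSpace ℝ (Fin p)) {ρ : ℝ} (hρ : 0 < ρ) :
    ∃ M, 0 ≤ M ∧ ∀ m, ∀ x ∈ ball c ρ, |g m x| ≤ M := by
  classical
  set s : Set (EuclideanSpace ℝ (Fin p)) :=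
    insert c (Set.range fun ib : Fin p × Bool =>
      c + (if ib.2 then ((p:ℝ)+1)*ρ else -(((p:ℝ)+1)*ρ)) • EuclideanSpace.single ib.1 (1:ℝ)) with hs
  have hsfin : s.Finite := (Set.finite_range _).insert c
  choose b hb using hbd
  obtain ⟨B, hB⟩ := (hsfin.image b).bddAbove
  have hBs : ∀ y ∈ s, ∀ m, |g m y| ≤ B := fun y hy m =>
    (hb y m).trans (hB (Set.mem_image_of_mem b hy))
  have hB0 : 0 ≤ B := le_trans (abs_nonneg _) (hBs c (Set.mem_insert _ _) 0)
  -- lower bound on the ball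
  have hlow : ∀ m, ∀ x ∈ ball c ρ, -B ≤ g m x := by
    intro m x hx
    obtain ⟨y, hy, hyx⟩ := (hconc m).exists_le_of_mem_convexHull (Set.subset_univ s)
      (AG_ball_subset_hull c hρ hx)
    have := hBs y hy m
    have := neg_abs_le (g m y)
    linarith
  -- upper bound via reflection
  refine ⟨3 * B, by positivity, fun m x hx => ?_⟩
  have hx' : (2:ℝ) • c - x ∈ ball c ρ := by
    rw [mem_ball, dist_eq_norm] at hx ⊢
    have : (2:ℝ) • c - x - c = -(x - c) := by module
    rw [this, norm_neg]
    exact hx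
  have hmid : (1/2 : ℝ) • x + (1/2 : ℝ) • ((2:ℝ) • c - x) = c := by module
  have hcc := (hconc m).2 (Set.mem_univ x) (Set.mem_univ ((2:ℝ) • c - x))
    (by norm_num) (by norm_num) (by norm_num : (1/2:ℝ) + 1/2 = 1)
  rw [hmid] at hcc
  have h1 : g m c ≤ B := le_trans (le_abs_self _) (hBs c (Set.mem_insert _ _) m)
  have h2 : -B ≤ g m ((2:ℝ) • c - x) := hlow m _ hx'
  have h3 : -B ≤ g m x := hlow m x hx
  rw [abs_le]
  constructor <;> [linarith; skip]
  have : (1/2:ℝ) * g m x + (1/2:ℝ) * g m ((2:ℝ) • c - x) ≤ g m c := by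
    simpa [smul_eq_mul] using hcc
  linarith

-- equi-Lipschitz: both f and all fseq are Lipschitz with a common constant on a ball
lemma AG_lip {p : ℕ}
    (f : EuclideanSpace ℝ (Fin p) → ℝ)
    (fseq : ℕ → EuclideanSpace ℝ (Fin p) → ℝ)
    (β₀ : EuclideanSpace ℝ (Fin p))
    (hf_concave : ConcaveOn ℝ Set.univ f)
    (hfn_concave : ∀ m, ConcaveOn ℝ Set.univ (fseq m))
    (hptwise : ∀ β, Tendsto (fun m => fseq m β) atTop (𝓝 (f β)))
    {ρ : ℝ} (hρ : 0 < ρ) :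
    ∃ L : NNReal, LipschitzOnWith L f (ball β₀ (ρ + 1)) ∧
      ∀ m, LipschitzOnWith L (fseq m) (ball β₀ (ρ + 1)) := by
  have hbd : ∀ x, ∃ b, ∀ m, |fseq m x| ≤ b := by
    intro x
    obtain ⟨b, hb⟩ := ((hptwise x).abs).bddAbove_range
    exact ⟨b, fun m => hb ⟨m, rfl⟩⟩
  have hρ2 : (0:ℝ) < ρ + 2 := by linarith
  obtain ⟨M, hM0, hM⟩ := AG_uniform_bound hfn_concave hbd β₀ hρ2
  have hMf : ∀ x ∈ ball β₀ (ρ + 2), |f x| ≤ M := fun x hx =>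
    le_of_tendsto ((hptwise x).abs) (Eventually.of_forall fun m => hM m x hx)
  refine ⟨(2 * M / 1).toNNReal, ?_, fun m => ?_⟩
  · have := (hf_concave.subset (Set.subset_univ _) (convex_ball β₀ (ρ+2))).lipschitzOnWith_of_abs_le
      one_pos (fun a ha => hMf a (mem_ball.2 ha))
    rw [show ρ + 1 = ρ + 2 - 1 by ring]
    simpa using this
  · have := ((hfn_concave m).subset (Set.subset_univ _) (convex_ball β₀ (ρ+2))).lipschitzOnWith_of_abs_le
      one_pos (fun a ha => hM m a (mem_ball.2 ha))
    rw [show ρ + 1 = ρ + 2 - 1 by ring]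
    simpa using this


end AGaux

/-- deterministic Andersen–Gill lemma: If `f : ℝ^p → ℝ` is concave with
unique maximizer `β₀` and `fₙ` is a sequence of concave functions converging pointwise
to `f`, then the convergence is uniform on compact sets and any sequence of maximizers
`βₙ` of `fₙ` converges to `β₀`. -/
theorem concave_pointwise_convergence_of_maximizers
    {p : ℕ}
    (f : EuclideanSpace ℝ (Fin p) → ℝ)
    (fseq : ℕ → EuclideanSpace ℝ (Fin p) → ℝ)
    (β₀ : EuclideanSpace ℝ (Fin p))
    (βseq : ℕ → EuclideanSpace ℝ (Fin p))
    (hf_concave : ConcaveOn ℝ Set.univ f)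
    (hfn_concave : ∀ m, ConcaveOn ℝ Set.univ (fseq m))
    (hmax : ∀ β, f β ≤ f β₀)
    (huniq : ∀ β, β ≠ β₀ → f β < f β₀)       -- β₀ is the unique maximizer of f
    (hptwise : ∀ β, Tendsto (fun m => fseq m β) atTop (𝓝 (f β)))
    (hβmax : ∀ m β, fseq m β ≤ fseq m (βseq m)) :  -- βₙ maximizes fₙ
    (∀ K : Set (EuclideanSpace ℝ (Fin p)), IsCompact K →
        TendstoUniformlyOn fseq f atTop K)
      ∧ Tendsto βseq atTop (𝓝 β₀) := by
  have hUC : ∀ K : Set (EuclideanSpace ℝ (Fin p)), IsCompact K →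
      TendstoUniformlyOn fseq f atTop K := by
    intro K hK
    obtain ⟨R, hR⟩ := hK.isBounded.subset_closedBall β₀
    set ρ : ℝ := max R 0 + 1 with hρdef
    have hρ : 0 < ρ := by positivity
    have hKball : K ⊆ ball β₀ (ρ + 1) := hR.trans (closedBall_subset_ball (by
      have : R ≤ max R 0 := le_max_left _ _
      linarith))
    obtain ⟨L, hLf, hLn⟩ := AG_lip f fseq β₀ hf_concave hfn_concave hptwise hρ
    rw [Metric.tendstoUniformlyOn_iff]
    intro ε hε
    have hL1 : (0:ℝ) < (L:ℝ) + 1 := by positivity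
    set δ : ℝ := ε / 3 / ((L:ℝ) + 1) with hδdef
    have hδ : 0 < δ := by positivity
    obtain ⟨t, htK, htfin, htcover⟩ :=
      hK.totallyBounded.exists_subset (dist_mem_uniformity hδ)
    have hev : ∀ᶠ m in atTop, ∀ y ∈ t, dist (fseq m y) (f y) < ε / 3 := by
      rw [eventually_all_finite htfin]
      intro y _
      exact Metric.tendsto_nhds.1 (hptwise y) (ε/3) (by positivity)
    filter_upwards [hev] with m hm x hx
    obtain ⟨y, hyt, hxy⟩ : ∃ y ∈ t, (x, y) ∈ {p : _ × _ | dist p.1 p.2 < δ} := by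
      have := htcover hx
      simp only [Set.mem_iUnion, UniformSpace.ball, Set.mem_preimage] at this
      obtain ⟨y, hyt, hxy⟩ := this
      exact ⟨y, hyt, by simpa [dist_comm] using hxy⟩
    have hxB : x ∈ ball β₀ (ρ + 1) := hKball hx
    have hyB : y ∈ ball β₀ (ρ + 1) := hKball (htK hyt)
    have hdxy : dist x y < δ := hxy
    have l1 : dist (f x) (f y) ≤ (L:ℝ) * dist x y := hLf.dist_le_mul x hxB y hyB
    have l2 : dist (fseq m x) (fseq m y) ≤ (L:ℝ) * dist x y := (hLn m).dist_le_mul x hxB y hyB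
    have l3 : dist (fseq m y) (f y) < ε / 3 := hm y hyt
    have hLd : (L:ℝ) * dist x y < ε / 3 := by
      calc (L:ℝ) * dist x y < ((L:ℝ)+1) * δ := by
            nlinarith [L.coe_nonneg, dist_nonneg (x := x) (y := y), hdxy, hδ]
        _ = ε / 3 * (((L:ℝ)+1) / ((L:ℝ)+1)) := by rw [hδdef]; ring
        _ ≤ ε / 3 := by rw [div_self (ne_of_gt hL1), mul_one]
    calc dist (f x) (fseq m x) ≤ dist (f x) (f y) + dist (f y) (fseq m y) + dist (fseq m y) (fseq m x) :=
          dist_triangle4 _ _ _ _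
      _ < ε/3 + ε/3 + ε/3 := by
          rw [dist_comm (f y) (fseq m y), dist_comm (fseq m y) (fseq m x)]
          have := dist_nonneg (x := x) (y := y)
          gcongr <;> linarith
      _ = ε := by ring
  refine ⟨hUC, ?_⟩
  rcases subsingleton_or_nontrivial (EuclideanSpace ℝ (Fin p)) with hsub | hnt
  · have : βseq = fun _ => β₀ := funext fun m => Subsingleton.elim _ _
    rw [this]; exact tendsto_const_nhds
  · rw [Metric.tendsto_nhds]
    intro r hr
    obtain ⟨L, hLf, -⟩ := AG_lip f (fun _ => f) β₀ hf_concave (fun _ => hf_concave)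
        (fun β => tendsto_const_nhds) hr
    have hScomp : IsCompact (sphere β₀ r) := isCompact_sphere β₀ r
    have hSsub : sphere β₀ r ⊆ ball β₀ (r + 1) := fun y hy => by
      rw [mem_sphere] at hy; rw [mem_ball, hy]; linarith
    have hcont : ContinuousOn f (sphere β₀ r) := hLf.continuousOn.mono hSsub
    have hSne : (sphere β₀ r).Nonempty := NormedSpace.sphere_nonempty.2 hr.le
    obtain ⟨y₀, hy₀S, hy₀max⟩ := hScomp.exists_isMaxOn hSne hcont
    have hy₀ne : y₀ ≠ β₀ := by
      intro h
      rw [mem_sphere, h, dist_self] at hy₀S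
      linarith
    have hy₀lt : f y₀ < f β₀ := huniq _ hy₀ne
    set ε : ℝ := (f β₀ - f y₀) / 2 with hε
    have hεpos : 0 < ε := by rw [hε]; linarith
    have h1 := (Metric.tendstoUniformlyOn_iff.1 (hUC _ hScomp)) ε hεpos
    have h2 : ∀ᶠ m in atTop, dist (fseq m β₀) (f β₀) < ε :=
      Metric.tendsto_nhds.1 (hptwise β₀) ε hεpos
    filter_upwards [h1, h2] with m h1m h2m
    by_contra hcon
    push_neg at hcon
    set D := dist (βseq m) β₀ with hD
    have hDpos : 0 < D := lt_of_lt_of_le hr hcon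
    set t : ℝ := r / D with ht
    have ht0 : 0 < t := div_pos hr hDpos
    have ht1 : t ≤ 1 := by rw [ht, div_le_one hDpos]; exact hcon
    set y := β₀ + t • (βseq m - β₀) with hy
    have hyS : y ∈ sphere β₀ r := by
      rw [mem_sphere, dist_eq_norm]
      have hyd : y - β₀ = t • (βseq m - β₀) := by rw [hy]; module
      rw [hyd, norm_smul, Real.norm_eq_abs, abs_of_pos ht0, ← dist_eq_norm, ← hD, ht]
      field_simp
    have hcc := (hfn_concave m).2 (Set.mem_univ β₀) (Set.mem_univ (βseq m))
      (by linarith : (0:ℝ) ≤ 1 - t) ht0.le (by ring)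
    have hyeq : (1-t) • β₀ + t • βseq m = y := by rw [hy]; module
    rw [hyeq] at hcc
    simp only [smul_eq_mul] at hcc
    have hmax' : fseq m β₀ ≤ fseq m (βseq m) := hβmax m β₀
    have hfy_ge : fseq m β₀ ≤ fseq m y := by nlinarith
    have e1 : |f y - fseq m y| < ε := by rw [← Real.dist_eq]; exact h1m y hyS
    have e2 : |fseq m β₀ - f β₀| < ε := by rw [← Real.dist_eq]; exact h2m
    have e3 : f y ≤ f y₀ := hy₀max hyS
    have e1' := abs_lt.1 e1
    have e2' := abs_lt.1 e2
    rw [hε] at e1' e2'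
    linarith [e1'.1, e1'.2, e2'.1, e2'.2]
end

section
/- The negative Hessian of f(β) = ∫_0^τ [ (β − β_0)' s_1(s,β_0) − log(s_0(s,β)/s_0(s,β_0)) s_0(s,β_0) ] λ_0(s) ds equals −∇²f(β) = ∫_0^τ v(s,β) s_0(s,β_0) λ_0(s) ds, where v(s,β) = s_2(s,β)/s_0(s,β) − (s_1(s,β)/s_0(s,β))^{⊗2}; this matrix is positive semidefinite whenever v(s,β) is positive semidefinite for each s, so f is concave, and if additionally Σ_τ = ∫_0^τ v(s,β_0) s_0(s,β_0) λ_0(s)ds is positive definite, then f is strictly concave at β_0 and β_0 is its unique maximizer. -/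
open MeasureTheory Set
open scoped RealInnerProductSpace

set_option maxHeartbeats 1000000 in
private lemma profile_master {p : ℕ} (τ : ℝ) (hτ : 0 ≤ τ)
    (s₀ : ℝ → EuclideanSpace ℝ (Fin p) → ℝ)
    (s₁ : ℝ → EuclideanSpace ℝ (Fin p) → EuclideanSpace ℝ (Fin p))
    (s₂ : ℝ → EuclideanSpace ℝ (Fin p) →
      EuclideanSpace ℝ (Fin p) → EuclideanSpace ℝ (Fin p))
    (lam₀ : ℝ → ℝ)
    (β₀ : EuclideanSpace ℝ (Fin p))
    (c C : ℝ) (hc : 0 < c)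
    (hs₀_low : ∀ s ∈ Icc 0 τ, ∀ β, c ≤ s₀ s β)
    (hs₀_bdd : ∀ s ∈ Icc 0 τ, ∀ β, s₀ s β ≤ C)
    (hs₁_bdd : ∀ s ∈ Icc 0 τ, ∀ β, ‖s₁ s β‖ ≤ C)
    (hs₂_bdd : ∀ s ∈ Icc 0 τ, ∀ β y, ‖s₂ s β y‖ ≤ C * ‖y‖)
    (hlam₀_nonneg : ∀ s, 0 ≤ lam₀ s)
    (hlam₀_int : IntegrableOn lam₀ (Icc 0 τ))
    (hmeas₀ : ∀ β, AEStronglyMeasurable (fun s => s₀ s β) (volume.restrict (Icc 0 τ)))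
    (hmeas₁ : ∀ β, AEStronglyMeasurable (fun s => s₁ s β) (volume.restrict (Icc 0 τ)))
    (hmeas₂ : ∀ β y, AEStronglyMeasurable (fun s => s₂ s β y)
      (volume.restrict (Icc 0 τ)))
    (hgrad₀ : ∀ s ∈ Icc 0 τ, ∀ β, HasGradientAt (fun b => s₀ s b) (s₁ s β) β)
    (hgrad₁ : ∀ s ∈ Icc 0 τ, ∀ β y, HasGradientAt (fun b => ⟪y, s₁ s b⟫) (s₂ s β y) β)
    (f : EuclideanSpace ℝ (Fin p) → ℝ)
    (hf : ∀ β, f β = ∫ s in Icc 0 τ,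
      (⟪β - β₀, s₁ s β₀⟫ - Real.log (s₀ s β / s₀ s β₀) * s₀ s β₀) * lam₀ s)
    (vq : ℝ → EuclideanSpace ℝ (Fin p) → EuclideanSpace ℝ (Fin p) → ℝ)
    (hvq : ∀ s β y, vq s β y
      = ⟪y, s₂ s β y⟫ / s₀ s β - (⟪y, s₁ s β⟫ / s₀ s β)^2)
    (β y : EuclideanSpace ℝ (Fin p)) (t₀ : ℝ) :
      HasDerivAt (fun u : ℝ => f (β + u • y))
        (∫ s in Icc (0:ℝ) τ,
          (⟪y, s₁ s β₀⟫ - ⟪y, s₁ s (β + t₀ • y)⟫ / s₀ s (β + t₀ • y) * s₀ s β₀) * lam₀ s) t₀ ∧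
      HasDerivAt (fun u : ℝ => ∫ s in Icc (0:ℝ) τ,
          (⟪y, s₁ s β₀⟫ - ⟪y, s₁ s (β + u • y)⟫ / s₀ s (β + u • y) * s₀ s β₀) * lam₀ s)
        (∫ s in Icc (0:ℝ) τ, -(vq s (β + t₀ • y) y) * s₀ s β₀ * lam₀ s) t₀ := by
  have h0 : (0:ℝ) ∈ Icc (0:ℝ) τ := ⟨le_rfl, hτ⟩
  have hcC : c ≤ C := le_trans (hs₀_low 0 h0 0) (hs₀_bdd 0 h0 0)
  have hC : 0 < C := lt_of_lt_of_le hc hcC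
  have hlam_meas : AEStronglyMeasurable lam₀ (volume.restrict (Icc 0 τ)) :=
    hlam₀_int.aestronglyMeasurable
  set γ : ℝ → EuclideanSpace ℝ (Fin p) := fun u => β + u • y with hγ
  have hγd : ∀ t : ℝ, HasDerivAt γ y t := fun t => by
    have h := ((hasDerivAt_id t).smul_const y).const_add β
    rw [one_smul] at h; exact h
  have h0pos : ∀ s ∈ Icc (0:ℝ) τ, ∀ b, 0 < s₀ s b :=
    fun s hs b => lt_of_lt_of_le hc (hs₀_low s hs b)
  have h0ne : ∀ s ∈ Icc (0:ℝ) τ, ∀ b, s₀ s b ≠ 0 :=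
    fun s hs b => ne_of_gt (h0pos s hs b)
  -- pointwise derivatives of composed maps
  have hd0 : ∀ s ∈ Icc (0:ℝ) τ, ∀ t : ℝ,
      HasDerivAt (fun u => s₀ s (γ u)) (⟪y, s₁ s (γ t)⟫) t := by
    intro s hs t
    have h := (hgrad₀ s hs (γ t)).hasFDerivAt.comp_hasDerivAt t (hγd t)
    have h2 : (InnerProductSpace.toDual ℝ (EuclideanSpace ℝ (Fin p)) (s₁ s (γ t)) : _ → ℝ) y
        = ⟪y, s₁ s (γ t)⟫ := by
      rw [InnerProductSpace.toDual_apply_apply]; exact real_inner_comm _ _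
    simp only [h2] at h; exact h
  have hd1 : ∀ s ∈ Icc (0:ℝ) τ, ∀ t : ℝ,
      HasDerivAt (fun u => ⟪y, s₁ s (γ u)⟫) (⟪y, s₂ s (γ t) y⟫) t := by
    intro s hs t
    have h := (hgrad₁ s hs (γ t) y).hasFDerivAt.comp_hasDerivAt t (hγd t)
    have h2 : (InnerProductSpace.toDual ℝ (EuclideanSpace ℝ (Fin p)) (s₂ s (γ t) y) : _ → ℝ) y
        = ⟪y, s₂ s (γ t) y⟫ := by
      rw [InnerProductSpace.toDual_apply_apply]; exact real_inner_comm _ _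
    simp only [h2] at h; exact h
  have hder1 : ∀ s ∈ Icc (0:ℝ) τ, ∀ t : ℝ,
      HasDerivAt (fun u : ℝ =>
          (⟪γ u - β₀, s₁ s β₀⟫ - Real.log (s₀ s (γ u) / s₀ s β₀) * s₀ s β₀) * lam₀ s)
        ((⟪y, s₁ s β₀⟫ - ⟪y, s₁ s (γ t)⟫ / s₀ s (γ t) * s₀ s β₀) * lam₀ s) t := by
    intro s hs t
    have hinner : HasDerivAt (fun u : ℝ => ⟪γ u - β₀, s₁ s β₀⟫) (⟪y, s₁ s β₀⟫) t := by
      have he : (fun u : ℝ => ⟪γ u - β₀, s₁ s β₀⟫)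
          = fun u : ℝ => ⟪β - β₀, s₁ s β₀⟫ + u * ⟪y, s₁ s β₀⟫ := by
        funext u
        have hγu : γ u - β₀ = (β - β₀) + u • y := by simp [hγ]; module
        rw [hγu, inner_add_left, real_inner_smul_left]
      rw [he]
      simpa using (hasDerivAt_mul_const (⟪y, s₁ s β₀⟫ : ℝ)).const_add (⟪β - β₀, s₁ s β₀⟫ : ℝ)
    have hlog : HasDerivAt (fun u : ℝ => Real.log (s₀ s (γ u) / s₀ s β₀))
        (⟪y, s₁ s (γ t)⟫ / s₀ s (γ t)) t := by
      have heq : (fun u : ℝ => Real.log (s₀ s (γ u) / s₀ s β₀))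
          = fun u : ℝ => Real.log (s₀ s (γ u)) - Real.log (s₀ s β₀) := by
        funext u; rw [Real.log_div (h0ne s hs _) (h0ne s hs _)]
      rw [heq]
      exact ((hd0 s hs t).log (h0ne s hs _)).sub_const _
    exact (hinner.sub (hlog.mul_const _)).mul_const _
  have hder2 : ∀ s ∈ Icc (0:ℝ) τ, ∀ t : ℝ,
      HasDerivAt (fun u : ℝ =>
          (⟪y, s₁ s β₀⟫ - ⟪y, s₁ s (γ u)⟫ / s₀ s (γ u) * s₀ s β₀) * lam₀ s)
        (-(vq s (γ t) y) * s₀ s β₀ * lam₀ s) t := by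
    intro s hs t
    have hq : HasDerivAt (fun u : ℝ => ⟪y, s₁ s (γ u)⟫ / s₀ s (γ u))
        ((⟪y, s₂ s (γ t) y⟫ * s₀ s (γ t) - ⟪y, s₁ s (γ t)⟫ * ⟪y, s₁ s (γ t)⟫)
          / (s₀ s (γ t))^2) t :=
      (hd1 s hs t).div (hd0 s hs t) (h0ne s hs _)
    have h2 := ((hq.mul_const (s₀ s β₀)).const_sub (⟪y, s₁ s β₀⟫ : ℝ)).mul_const (lam₀ s)
    refine HasDerivAt.congr_deriv h2 ?_
    have hne := h0ne s hs (γ t)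
    rw [hvq]
    field_simp

  -- bounds
  have habs1 : ∀ s ∈ Icc (0:ℝ) τ, ∀ b, |(⟪y, s₁ s b⟫ : ℝ)| ≤ ‖y‖ * C := by
    intro s hs b
    exact (abs_real_inner_le_norm y _).trans
      (mul_le_mul_of_nonneg_left (hs₁_bdd s hs b) (norm_nonneg y))
  have habs2 : ∀ s ∈ Icc (0:ℝ) τ, ∀ b, |(⟪y, s₂ s b y⟫ : ℝ)| ≤ ‖y‖ * (C * ‖y‖) := by
    intro s hs b
    exact (abs_real_inner_le_norm y _).trans
      (mul_le_mul_of_nonneg_left (hs₂_bdd s hs b y) (norm_nonneg y))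
  have hdivbd : ∀ s ∈ Icc (0:ℝ) τ, ∀ b (q Q : ℝ), |q| ≤ Q →
      |q / s₀ s b| ≤ Q / c := by
    intro s hs b q Q hq
    rw [abs_div, abs_of_pos (h0pos s hs b)]
    exact div_le_div₀ (le_trans (abs_nonneg q) hq) hq hc (hs₀_low s hs b)
  have hbd1 : ∀ s ∈ Icc (0:ℝ) τ, ∀ t : ℝ,
      ‖(⟪y, s₁ s β₀⟫ - ⟪y, s₁ s (γ t)⟫ / s₀ s (γ t) * s₀ s β₀) * lam₀ s‖
        ≤ (‖y‖ * C + ‖y‖ * C / c * C) * lam₀ s := by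
    intro s hs t
    rw [Real.norm_eq_abs, abs_mul, abs_of_nonneg (hlam₀_nonneg s)]
    refine mul_le_mul_of_nonneg_right ?_ (hlam₀_nonneg s)
    refine (abs_sub _ _).trans (add_le_add (habs1 s hs β₀) ?_)
    have h1 : |(⟪y, s₁ s (γ t)⟫ : ℝ) / s₀ s (γ t)| ≤ ‖y‖ * C / c :=
      hdivbd s hs _ _ _ (habs1 s hs _)
    calc |(⟪y, s₁ s (γ t)⟫ : ℝ) / s₀ s (γ t) * s₀ s β₀|
        = |(⟪y, s₁ s (γ t)⟫ : ℝ) / s₀ s (γ t)| * s₀ s β₀ := by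
          rw [abs_mul, abs_of_nonneg (le_of_lt (h0pos s hs β₀))]
      _ ≤ ‖y‖ * C / c * C :=
          mul_le_mul h1 (hs₀_bdd s hs β₀) (le_of_lt (h0pos s hs β₀))
            (le_trans (abs_nonneg _) h1)
  have hvqbd : ∀ s ∈ Icc (0:ℝ) τ, ∀ b, |vq s b y|
      ≤ ‖y‖ * (C * ‖y‖) / c + (‖y‖ * C / c)^2 := by
    intro s hs b
    rw [hvq]
    refine (abs_sub _ _).trans (add_le_add (hdivbd s hs _ _ _ (habs2 s hs b)) ?_)
    rw [abs_pow]
    have h1 : |(⟪y, s₁ s b⟫ : ℝ) / s₀ s b| ≤ ‖y‖ * C / c :=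
      hdivbd s hs _ _ _ (habs1 s hs b)
    exact pow_le_pow_left₀ (abs_nonneg _) h1 2
  have hbd2 : ∀ s ∈ Icc (0:ℝ) τ, ∀ t : ℝ,
      ‖-(vq s (γ t) y) * s₀ s β₀ * lam₀ s‖
        ≤ (‖y‖ * (C * ‖y‖) / c + (‖y‖ * C / c)^2) * C * lam₀ s := by
    intro s hs t
    rw [Real.norm_eq_abs, abs_mul, abs_mul, abs_neg,
      abs_of_nonneg (le_of_lt (h0pos s hs β₀)), abs_of_nonneg (hlam₀_nonneg s)]
    refine mul_le_mul_of_nonneg_right ?_ (hlam₀_nonneg s)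
    exact mul_le_mul (hvqbd s hs _) (hs₀_bdd s hs β₀) (le_of_lt (h0pos s hs β₀))
      (le_trans (abs_nonneg _) (hvqbd s hs (γ t)))
  -- measurability
  have hin : ∀ b', AEStronglyMeasurable (fun s => (⟪y, s₁ s b'⟫ : ℝ))
      (volume.restrict (Icc 0 τ)) :=
    fun b' => aestronglyMeasurable_const.inner (hmeas₁ b')
  have hmA' : ∀ t : ℝ, AEStronglyMeasurable
      (fun s => (⟪y, s₁ s β₀⟫ - ⟪y, s₁ s (γ t)⟫ / s₀ s (γ t) * s₀ s β₀) * lam₀ s)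
      (volume.restrict (Icc 0 τ)) := by
    intro t
    exact ((hin β₀).sub ((((hin (γ t)).aemeasurable.div
      (hmeas₀ (γ t)).aemeasurable).aestronglyMeasurable).mul (hmeas₀ β₀))).mul hlam_meas
  have hmA : ∀ t : ℝ, AEStronglyMeasurable
      (fun s => (⟪γ t - β₀, s₁ s β₀⟫ - Real.log (s₀ s (γ t) / s₀ s β₀) * s₀ s β₀) * lam₀ s)
      (volume.restrict (Icc 0 τ)) := by
    intro t
    have hlog : AEStronglyMeasurable (fun s => Real.log (s₀ s (γ t) / s₀ s β₀))
        (volume.restrict (Icc 0 τ)) :=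
      (Real.measurable_log.comp_aemeasurable
        ((hmeas₀ (γ t)).aemeasurable.div (hmeas₀ β₀).aemeasurable)).aestronglyMeasurable
    exact ((aestronglyMeasurable_const.inner (hmeas₁ β₀)).sub
      (hlog.mul (hmeas₀ β₀))).mul hlam_meas
  have hmA'' : AEStronglyMeasurable
      (fun s => -(vq s (γ t₀) y) * s₀ s β₀ * lam₀ s) (volume.restrict (Icc 0 τ)) := by
    have hvqm : AEStronglyMeasurable (fun s => vq s (γ t₀) y) (volume.restrict (Icc 0 τ)) := by
      have : (fun s => vq s (γ t₀) y)
          = fun s => ⟪y, s₂ s (γ t₀) y⟫ / s₀ s (γ t₀) - (⟪y, s₁ s (γ t₀)⟫ / s₀ s (γ t₀))^2 := by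
        funext s; rw [hvq]
      rw [this]
      exact ((((aestronglyMeasurable_const.inner (hmeas₂ (γ t₀) y)).aemeasurable.div
        (hmeas₀ (γ t₀)).aemeasurable)).sub
        (((hin (γ t₀)).aemeasurable.div (hmeas₀ (γ t₀)).aemeasurable).pow_const 2)).aestronglyMeasurable
    exact (hvqm.neg.mul (hmeas₀ β₀)).mul hlam_meas
  -- integrability of f-integrand at t₀
  have hintA : Integrable
      (fun s => (⟪γ t₀ - β₀, s₁ s β₀⟫ - Real.log (s₀ s (γ t₀) / s₀ s β₀) * s₀ s β₀) * lam₀ s)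
      (volume.restrict (Icc 0 τ)) := by
    set Lg : ℝ := max |Real.log c| |Real.log C| with hLg
    refine Integrable.mono' (hlam₀_int.const_mul ((‖γ t₀ - β₀‖ * C + 2 * Lg * C)))
      (hmA t₀) ?_
    filter_upwards [ae_restrict_mem measurableSet_Icc] with s hs
    have hlogbd : ∀ b, |Real.log (s₀ s b)| ≤ Lg := by
      intro b
      have h1 : Real.log c ≤ Real.log (s₀ s b) :=
        Real.log_le_log hc (hs₀_low s hs b)
      have h2 : Real.log (s₀ s b) ≤ Real.log C :=
        Real.log_le_log (h0pos s hs b) (hs₀_bdd s hs b)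
      rw [abs_le]
      refine ⟨?_, ?_⟩
      · have := neg_abs_le (Real.log c)
        have := le_max_left |Real.log c| |Real.log C|
        simp only [hLg]; linarith
      · have := le_abs_self (Real.log C)
        have := le_max_right |Real.log c| |Real.log C|
        simp only [hLg]; linarith
    rw [Real.norm_eq_abs, abs_mul, abs_of_nonneg (hlam₀_nonneg s)]
    refine mul_le_mul_of_nonneg_right ?_ (hlam₀_nonneg s)
    refine (abs_sub _ _).trans (add_le_add ?_ ?_)
    · exact (abs_real_inner_le_norm _ _).trans
        (mul_le_mul_of_nonneg_left (hs₁_bdd s hs β₀) (norm_nonneg _))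
    · rw [Real.log_div (h0ne s hs _) (h0ne s hs _), abs_mul,
        abs_of_nonneg (le_of_lt (h0pos s hs β₀))]
      have h3 : |Real.log (s₀ s (γ t₀)) - Real.log (s₀ s β₀)| ≤ 2 * Lg := by
        refine (abs_sub _ _).trans ?_
        have := hlogbd (γ t₀); have := hlogbd β₀; linarith
      exact mul_le_mul h3 (hs₀_bdd s hs β₀) (le_of_lt (h0pos s hs β₀))
        (by positivity)
  -- first application of dominated differentiation
  have key1 := hasDerivAt_integral_of_dominated_loc_of_deriv_le (μ := volume.restrict (Icc 0 τ))
      (F := fun t s => (⟪γ t - β₀, s₁ s β₀⟫ - Real.log (s₀ s (γ t) / s₀ s β₀) * s₀ s β₀) * lam₀ s)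
      (F' := fun t s => (⟪y, s₁ s β₀⟫ - ⟪y, s₁ s (γ t)⟫ / s₀ s (γ t) * s₀ s β₀) * lam₀ s)
      (bound := fun s => (‖y‖ * C + ‖y‖ * C / c * C) * lam₀ s)
      Filter.univ_mem
      (Filter.Eventually.of_forall hmA) hintA (hmA' t₀)
      (by
        filter_upwards [ae_restrict_mem measurableSet_Icc] with s hs
        intro t _; exact hbd1 s hs t)
      (hlam₀_int.const_mul _)
      (by
        filter_upwards [ae_restrict_mem measurableSet_Icc] with s hs
        intro t _; exact hder1 s hs t)
  have key2 := hasDerivAt_integral_of_dominated_loc_of_deriv_le (μ := volume.restrict (Icc 0 τ))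
      (F := fun t s => (⟪y, s₁ s β₀⟫ - ⟪y, s₁ s (γ t)⟫ / s₀ s (γ t) * s₀ s β₀) * lam₀ s)
      (F' := fun t s => -(vq s (γ t) y) * s₀ s β₀ * lam₀ s)
      (bound := fun s => (‖y‖ * (C * ‖y‖) / c + (‖y‖ * C / c)^2) * C * lam₀ s)
      Filter.univ_mem
      (Filter.Eventually.of_forall hmA') (key1.1) hmA''
      (by
        filter_upwards [ae_restrict_mem measurableSet_Icc] with s hs
        intro t _; exact hbd2 s hs t)
      (hlam₀_int.const_mul _)
      (by
        filter_upwards [ae_restrict_mem measurableSet_Icc] with s hs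
        intro t _; exact hder2 s hs t)
  refine ⟨?_, key2.2⟩
  have hfe : (fun u : ℝ => f (γ u)) = fun u : ℝ =>
      ∫ s in Icc (0:ℝ) τ,
        (⟪γ u - β₀, s₁ s β₀⟫ - Real.log (s₀ s (γ u) / s₀ s β₀) * s₀ s β₀) * lam₀ s :=
    funext fun u => hf (γ u)
  rw [show (fun u : ℝ => f (β + u • y)) = fun u : ℝ => f (γ u) from rfl, hfe]
  exact key1.2

set_option maxHeartbeats 1000000

/-- For
`f(β) = ∫_0^τ [ (β−β₀)'s_1(s,β₀) − log(s_0(s,β)/s_0(s,β₀)) s_0(s,β₀) ] λ_0(s) ds`,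
the negative Hessian is `−∇²f(β) = ∫_0^τ v(s,β) s_0(s,β₀) λ_0(s) ds` with
`v(s,β) = s_2(s,β)/s_0(s,β) − (s_1(s,β)/s_0(s,β))^{⊗2}` (stated via the quadratic
forms `y ↦ y'v(s,β)y` and second directional derivatives of `f`); if each `v(s,β)` is
positive semidefinite then `f` is concave, and if in addition
`Σ_τ = ∫_0^τ v(s,β₀) s_0(s,β₀) λ_0(s) ds` is positive definite, then `β₀` is the unique
maximizer of `f` (`f(β) < f(β₀)` for `β ≠ β₀`). -/
theorem hessian_concavity_unique_maximizer_profile_objective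
    {p : ℕ} (τ : ℝ) (hτ : 0 ≤ τ)
    (s₀ : ℝ → EuclideanSpace ℝ (Fin p) → ℝ)
    (s₁ : ℝ → EuclideanSpace ℝ (Fin p) → EuclideanSpace ℝ (Fin p))
    (s₂ : ℝ → EuclideanSpace ℝ (Fin p) →
      EuclideanSpace ℝ (Fin p) → EuclideanSpace ℝ (Fin p))  -- s₂(s,β) as a linear map on y
    (lam₀ : ℝ → ℝ)
    (β₀ : EuclideanSpace ℝ (Fin p))
    (c C : ℝ) (hc : 0 < c)
    (hs₀_low : ∀ s ∈ Icc 0 τ, ∀ β, c ≤ s₀ s β)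
    (hs₀_bdd : ∀ s ∈ Icc 0 τ, ∀ β, s₀ s β ≤ C)
    (hs₁_bdd : ∀ s ∈ Icc 0 τ, ∀ β, ‖s₁ s β‖ ≤ C)
    (hs₂_bdd : ∀ s ∈ Icc 0 τ, ∀ β y, ‖s₂ s β y‖ ≤ C * ‖y‖)
    (hlam₀_nonneg : ∀ s, 0 ≤ lam₀ s)
    (hlam₀_int : IntegrableOn lam₀ (Icc 0 τ))
    (hmeas₀ : ∀ β, AEStronglyMeasurable (fun s => s₀ s β) (volume.restrict (Icc 0 τ)))
    (hmeas₁ : ∀ β, AEStronglyMeasurable (fun s => s₁ s β) (volume.restrict (Icc 0 τ)))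
    (hmeas₂ : ∀ β y, AEStronglyMeasurable (fun s => s₂ s β y)
      (volume.restrict (Icc 0 τ)))
    -- s₁ = ∂s₀/∂β and s₂ = ∂s₁/∂β  (Condition (d))
    (hgrad₀ : ∀ s ∈ Icc 0 τ, ∀ β, HasGradientAt (fun b => s₀ s b) (s₁ s β) β)
    (hgrad₁ : ∀ s ∈ Icc 0 τ, ∀ β y, HasGradientAt (fun b => ⟪y, s₁ s b⟫) (s₂ s β y) β)
    (f : EuclideanSpace ℝ (Fin p) → ℝ)
    (hf : ∀ β, f β = ∫ s in Icc 0 τ,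
      (⟪β - β₀, s₁ s β₀⟫ - Real.log (s₀ s β / s₀ s β₀) * s₀ s β₀) * lam₀ s)
    -- the quadratic form y ↦ y' v(s,β) y  of  v = s₂/s₀ − (s₁/s₀)^{⊗2}
    (vq : ℝ → EuclideanSpace ℝ (Fin p) → EuclideanSpace ℝ (Fin p) → ℝ)
    (hvq : ∀ s β y, vq s β y
      = ⟪y, s₂ s β y⟫ / s₀ s β - (⟪y, s₁ s β⟫ / s₀ s β)^2) :
    -- (1) −∇²f(β) = ∫ v(s,β) s₀(s,β₀) λ₀(s) ds, via second directional derivatives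
    (∀ β y, - deriv (deriv (fun t : ℝ => f (β + t • y))) 0
        = ∫ s in Icc 0 τ, vq s β y * s₀ s β₀ * lam₀ s)
    ∧
    -- (2) v(s,β) positive semidefinite for all s ⟹ f concave
    ((∀ s ∈ Icc 0 τ, ∀ β y, 0 ≤ vq s β y) → ConcaveOn ℝ Set.univ f)
    ∧
    -- (3) additionally Σ_τ positive definite ⟹ β₀ unique maximizer
    ((∀ s ∈ Icc 0 τ, ∀ β y, 0 ≤ vq s β y) →
      (∀ y : EuclideanSpace ℝ (Fin p), y ≠ 0 →
        0 < ∫ s in Icc 0 τ, vq s β₀ y * s₀ s β₀ * lam₀ s) →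
      ∀ β, β ≠ β₀ → f β < f β₀) := by
  have master := profile_master τ hτ s₀ s₁ s₂ lam₀ β₀ c C hc hs₀_low hs₀_bdd hs₁_bdd
    hs₂_bdd hlam₀_nonneg hlam₀_int hmeas₀ hmeas₁ hmeas₂ hgrad₀ hgrad₁ f hf vq hvq
  have hderiv1 : ∀ (β y : EuclideanSpace ℝ (Fin p)),
      deriv (fun t : ℝ => f (β + t • y)) = fun t : ℝ => ∫ s in Icc (0:ℝ) τ,
        (⟪y, s₁ s β₀⟫ - ⟪y, s₁ s (β + t • y)⟫ / s₀ s (β + t • y) * s₀ s β₀) * lam₀ s :=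
    fun β y => funext fun t => ((master β y t).1).deriv
  have hderiv2 : ∀ (β y : EuclideanSpace ℝ (Fin p)) (t : ℝ),
      deriv (fun u : ℝ => ∫ s in Icc (0:ℝ) τ,
          (⟪y, s₁ s β₀⟫ - ⟪y, s₁ s (β + u • y)⟫ / s₀ s (β + u • y) * s₀ s β₀) * lam₀ s) t
        = ∫ s in Icc (0:ℝ) τ, -(vq s (β + t • y) y) * s₀ s β₀ * lam₀ s :=
    fun β y t => ((master β y t).2).deriv
  have hD2nonpos : (∀ s ∈ Icc 0 τ, ∀ β y, 0 ≤ vq s β y) →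
      ∀ (β y : EuclideanSpace ℝ (Fin p)) (t : ℝ),
      (∫ s in Icc (0:ℝ) τ, -(vq s (β + t • y) y) * s₀ s β₀ * lam₀ s) ≤ 0 := by
    intro hpsd β y t
    refine integral_nonpos_of_ae ?_
    filter_upwards [ae_restrict_mem measurableSet_Icc] with s hs
    have h1 : 0 ≤ vq s (β + t • y) y := hpsd s hs _ _
    have h2 : 0 ≤ s₀ s β₀ := le_of_lt (lt_of_lt_of_le hc (hs₀_low s hs β₀))
    have h3 := hlam₀_nonneg s
    have : 0 ≤ vq s (β + t • y) y * s₀ s β₀ * lam₀ s := by positivity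
    simp only [Pi.zero_apply, neg_mul]
    linarith
  have hconc_line : (∀ s ∈ Icc 0 τ, ∀ β y, 0 ≤ vq s β y) →
      ∀ (x z : EuclideanSpace ℝ (Fin p)), ConcaveOn ℝ univ (fun t : ℝ => f (x + t • z)) := by
    intro hpsd x z
    have hdiff : Differentiable ℝ (fun t : ℝ => f (x + t • z)) :=
      fun t => ((master x z t).1).differentiableAt
    have hanti : Antitone (deriv (fun t : ℝ => f (x + t • z))) := by
      rw [hderiv1 x z]
      refine antitone_of_deriv_nonpos (fun t => ((master x z t).2).differentiableAt) ?_
      intro t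
      rw [hderiv2 x z t]
      exact hD2nonpos hpsd x z t
    exact hanti.concaveOn_univ_of_deriv hdiff
  refine ⟨?_, ?_, ?_⟩
  · -- (1)
    intro β y
    rw [hderiv1 β y, hderiv2 β y 0]
    rw [show β + (0:ℝ) • y = β by simp]
    simp only [neg_mul]
    rw [integral_neg, neg_neg]
  · -- (2)
    intro hpsd
    refine ⟨convex_univ, ?_⟩
    intro x _ yv _ a b ha hb hab
    have hcl := (hconc_line hpsd x (yv - x)).2 (mem_univ (0:ℝ)) (mem_univ (1:ℝ)) ha hb hab
    simp only [smul_eq_mul, mul_zero, mul_one, zero_add] at hcl ⊢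
    have ha' : a = 1 - b := by linarith
    subst ha'
    have e0 : x + (0:ℝ) • (yv - x) = x := by simp
    have e1 : x + (1:ℝ) • (yv - x) = yv := by
      rw [one_smul]; module
    have eb : x + b • (yv - x) = (1 - b) • x + b • yv := by module
    rw [e0, e1, eb] at hcl
    exact hcl
  · -- (3)
    intro hpsd hpd β hβ
    set z : EuclideanSpace ℝ (Fin p) := β - β₀ with hz
    have hzne : z ≠ 0 := sub_ne_zero.mpr hβ
    set g : ℝ → ℝ := fun t : ℝ => f (β₀ + t • z) with hg
    set g' : ℝ → ℝ := fun t : ℝ => ∫ s in Icc (0:ℝ) τ,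
      (⟪z, s₁ s β₀⟫ - ⟪z, s₁ s (β₀ + t • z)⟫ / s₀ s (β₀ + t • z) * s₀ s β₀) * lam₀ s with hg'
    have hg'd : ∀ t : ℝ, HasDerivAt g (g' t) t := fun t => (master β₀ z t).1
    have hg''d : ∀ t : ℝ, HasDerivAt g'
        (∫ s in Icc (0:ℝ) τ, -(vq s (β₀ + t • z) z) * s₀ s β₀ * lam₀ s) t :=
      fun t => (master β₀ z t).2
    have hanti : Antitone g' := by
      refine antitone_of_deriv_nonpos (fun t => (hg''d t).differentiableAt) ?_
      intro t
      rw [(hg''d t).deriv]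
      exact hD2nonpos hpsd β₀ z t
    have hg'0 : g' 0 = 0 := by
      simp only [hg']
      rw [show β₀ + (0:ℝ) • z = β₀ by simp]
      refine integral_eq_zero_of_ae ?_
      filter_upwards [ae_restrict_mem measurableSet_Icc] with s hs
      have hne : s₀ s β₀ ≠ 0 := ne_of_gt (lt_of_lt_of_le hc (hs₀_low s hs β₀))
      rw [div_mul_cancel₀ _ hne, sub_self, zero_mul]; rfl
    have hSig : 0 < ∫ s in Icc (0:ℝ) τ, vq s β₀ z * s₀ s β₀ * lam₀ s := hpd z hzne
    have hneg : HasDerivAt g'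
        (-(∫ s in Icc (0:ℝ) τ, vq s β₀ z * s₀ s β₀ * lam₀ s)) 0 := by
      have h := hg''d 0
      rw [show β₀ + (0:ℝ) • z = β₀ by simp] at h
      simp only [neg_mul] at h
      rwa [integral_neg] at h
    -- find small positive t with g' t < 0
    have hslope : Filter.Tendsto (slope g' 0) (nhdsWithin 0 {(0:ℝ)}ᶜ)
        (nhds (-(∫ s in Icc (0:ℝ) τ, vq s β₀ z * s₀ s β₀ * lam₀ s))) :=
      hasDerivAt_iff_tendsto_slope.mp hneg
    have hevlt : ∀ᶠ u in nhdsWithin 0 {(0:ℝ)}ᶜ, slope g' 0 u < 0 :=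
      hslope.eventually_lt_const (by linarith)
    have hmono : nhdsWithin (0:ℝ) (Ioi 0) ≤ nhdsWithin 0 {(0:ℝ)}ᶜ :=
      nhdsWithin_mono 0 (fun u hu => ne_of_gt hu)
    have hev' : ∀ᶠ u in nhdsWithin (0:ℝ) (Ioi 0), slope g' 0 u < 0 := hevlt.filter_mono hmono
    have hevIoo : ∀ᶠ u in nhdsWithin (0:ℝ) (Ioi 0), u ∈ Ioo (0:ℝ) 1 :=
      Ioo_mem_nhdsGT_of_mem ⟨le_rfl, zero_lt_one⟩
    obtain ⟨t, hts, htIoo⟩ := (hev'.and hevIoo).exists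
    have ht0 : 0 < t := htIoo.1
    have ht1 : t < 1 := htIoo.2
    have hg't : g' t < 0 := by
      rw [slope_def_field, hg'0, sub_zero, sub_zero] at hts
      rcases div_neg_iff.mp hts with ⟨h1, h2⟩ | ⟨h1, h2⟩
      · linarith
      · exact h1
    have hgdiff : Differentiable ℝ g := fun t => (hg'd t).differentiableAt
    have hgcont : Continuous g := hgdiff.continuous
    -- MVT on [t, 1]
    obtain ⟨ξ, hξ, hξeq⟩ := exists_hasDerivAt_eq_slope g g' ht1
      hgcont.continuousOn (fun x _ => hg'd x)
    have hξneg : g' ξ < 0 := lt_of_le_of_lt (hanti hξ.1.le) hg't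
    have h1t : (0:ℝ) < 1 - t := by linarith
    have hgl1 : g 1 - g t < 0 := by
      rw [hξeq] at hξneg
      have := (div_lt_iff₀ h1t).mp hξneg
      linarith
    -- MVT on [0, t]
    obtain ⟨ξ', hξ', hξ'eq⟩ := exists_hasDerivAt_eq_slope g g' ht0
      hgcont.continuousOn (fun x _ => hg'd x)
    have hξ'le : g' ξ' ≤ 0 := by
      have := hanti hξ'.1.le
      rwa [hg'0] at this
    have hgl2 : g t - g 0 ≤ 0 := by
      rw [hξ'eq] at hξ'le
      have := (div_le_iff₀ ht0).mp (by simpa using hξ'le)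
      linarith
    have e1 : β₀ + (1:ℝ) • z = β := by rw [hz, one_smul]; module
    have e0 : β₀ + (0:ℝ) • z = β₀ := by simp
    have hfβ : f β = g 1 := by
      show f β = f (β₀ + (1:ℝ) • z); rw [e1]
    have hfβ₀ : f β₀ = g 0 := by
      show f β₀ = f (β₀ + (0:ℝ) • z); rw [e0]
    rw [hfβ, hfβ₀]
    linarith
end
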